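/- For any orthonormal vectors v₁, v₂, v₃, v₄ in ℝ⁷, one has |ψ(v₁, v₂, v₃, v₄)| ≤ 1. (That is, the 4-form ψ = ∗φ is a calibration on ℝ⁷; its calibrated 4-planes are the coassociative planes.) -/

import Mathlib

noncomputable section

open scoped InnerProductSpace

/-- `3 × 3` determinant of coordinates `a, b, c` of `(x, y, z)`. -/
def det3 (a b c : Fin 7) (x y z : EuclideanSpace ℝ (Fin 7)) : ℝ :=
  x a * (y b * z c - y c * z b) - x b * (y a * z c - y c * z a) +
    x c * (y a * z b - y b * z a)

/-- The coefficient of `dx_a ∧ dx_b ∧ dx_c ∧ dx_d` evaluated on `(x, y, z, w)`: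
a `4 × 4` determinant of the corresponding coordinates. -/
def det4 (a b c d : Fin 7) (x y z w : EuclideanSpace ℝ (Fin 7)) : ℝ :=
  x a * det3 b c d y z w - x b * det3 a c d y z w +
    x c * det3 a b d y z w - x d * det3 a b c y z w

/-- The coassociative calibration `ψ = ∗φ` on `ℝ⁷` (indices `0,…,6`
corresponding to `x_1,…,x_7`):
`ψ = dx₁∧dx₂∧dx₃∧dx₄ − (dx₁∧dx₂ + dx₃∧dx₄)∧dx₆∧dx₇
   − (dx₁∧dx₃ + dx₄∧dx₂)∧dx₇∧dx₅ − (dx₁∧dx₄ + dx₂∧dx₃)∧dx₅∧dx₆`. -/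
def psi (x y z w : EuclideanSpace ℝ (Fin 7)) : ℝ :=
  det4 0 1 2 3 x y z w - det4 0 1 5 6 x y z w - det4 2 3 5 6 x y z w -
    det4 0 2 6 4 x y z w - det4 3 1 6 4 x y z w - det4 0 3 4 5 x y z w -
    det4 1 2 4 5 x y z w

def coA0 (y z w : EuclideanSpace ℝ (Fin 7)) : ℝ :=
  det3 1 2 3 y z w - det3 1 5 6 y z w - det3 2 6 4 y z w - det3 3 4 5 y z w

def coA1 (y z w : EuclideanSpace ℝ (Fin 7)) : ℝ :=
  -det3 0 2 3 y z w + det3 0 5 6 y z w + det3 3 6 4 y z w - det3 2 4 5 y z w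

def coA2 (y z w : EuclideanSpace ℝ (Fin 7)) : ℝ :=
  det3 0 1 3 y z w - det3 3 5 6 y z w + det3 0 6 4 y z w + det3 1 4 5 y z w

def coA3 (y z w : EuclideanSpace ℝ (Fin 7)) : ℝ :=
  -det3 0 1 2 y z w + det3 2 5 6 y z w - det3 1 6 4 y z w + det3 0 4 5 y z w

def coA4 (y z w : EuclideanSpace ℝ (Fin 7)) : ℝ :=
  det3 0 2 6 y z w + det3 3 1 6 y z w - det3 0 3 5 y z w - det3 1 2 5 y z w

def coA5 (y z w : EuclideanSpace ℝ (Fin 7)) : ℝ :=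
  -det3 0 1 6 y z w - det3 2 3 6 y z w + det3 0 3 4 y z w + det3 1 2 4 y z w

def coA6 (y z w : EuclideanSpace ℝ (Fin 7)) : ℝ :=
  det3 0 1 5 y z w + det3 2 3 5 y z w - det3 0 2 4 y z w - det3 3 1 4 y z w

/-- The coefficient vector of `ψ(·, y, z, w)`. -/
def coA (y z w : EuclideanSpace ℝ (Fin 7)) : Fin 7 → ℝ
  | 0 => coA0 y z w
  | 1 => coA1 y z w
  | 2 => coA2 y z w
  | 3 => coA3 y z w
  | 4 => coA4 y z w
  | 5 => coA5 y z w
  | 6 => coA6 y z w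

/-- The associative calibration `φ` evaluated on `(y, z, w)`. -/
def phi3 (y z w : EuclideanSpace ℝ (Fin 7)) : ℝ :=
  det3 4 5 6 y z w - det3 4 0 1 y z w - det3 4 2 3 y z w - det3 5 0 2 y z w -
    det3 5 3 1 y z w - det3 6 0 3 y z w - det3 6 1 2 y z w

set_option maxHeartbeats 4000000 in
lemma psi_eq_sum (x y z w : EuclideanSpace ℝ (Fin 7)) :
    psi x y z w = ∑ i : Fin 7, x i * coA y z w i := by
  simp only [psi, det4, det3, Fin.sum_univ_seven, coA, coA0, coA1, coA2, coA3,
    coA4, coA5, coA6]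
  ring

set_option maxHeartbeats 10000000 in
lemma sos_identity (y z w : EuclideanSpace ℝ (Fin 7)) :
    (∑ i : Fin 7, coA y z w i ^ 2) + phi3 y z w ^ 2 =
      (∑ i : Fin 7, y i * y i) * ((∑ i : Fin 7, z i * z i) *
          (∑ i : Fin 7, w i * w i)) +
        2 * ((∑ i : Fin 7, y i * z i) * ((∑ i : Fin 7, z i * w i) *
          (∑ i : Fin 7, y i * w i))) -
        (∑ i : Fin 7, y i * y i) * (∑ i : Fin 7, z i * w i) ^ 2 -
        (∑ i : Fin 7, z i * z i) * (∑ i : Fin 7, y i * w i) ^ 2 -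
        (∑ i : Fin 7, w i * w i) * (∑ i : Fin 7, y i * z i) ^ 2 := by
  simp only [Fin.sum_univ_seven, coA, phi3, det3, coA0, coA1, coA2, coA3,
    coA4, coA5, coA6]
  ring

/-- The 4-form `ψ = ∗φ` is a calibration: `|ψ(v₁, v₂, v₃, v₄)| ≤ 1` for any
orthonormal vectors `v₁, v₂, v₃, v₄` in `ℝ⁷`. -/
theorem abs_psi_le_one_of_orthonormal (v : Fin 4 → EuclideanSpace ℝ (Fin 7))
    (hv : Orthonormal ℝ v) : |psi (v 0) (v 1) (v 2) (v 3)| ≤ 1 := by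
  have hip : ∀ a b : Fin 4, (∑ i : Fin 7, v a i * v b i) =
      if a = b then 1 else 0 := by
    intro a b
    have h := orthonormal_iff_ite.mp hv a b
    simpa [PiLp.inner_apply, RCLike.inner_apply, conj_trivial, mul_comm] using h
  set y := v 1
  set z := v 2
  set w := v 3
  set x := v 0
  have hA : (∑ i : Fin 7, coA y z w i ^ 2) ≤ 1 := by
    have h := sos_identity y z w
    rw [hip 1 1, hip 2 2, hip 3 3, hip 1 2, hip 2 3, hip 1 3,
      if_pos rfl, if_pos rfl, if_pos rfl, if_neg (by decide),
      if_neg (by decide), if_neg (by decide)] at h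
    norm_num at h
    nlinarith [sq_nonneg (phi3 y z w)]
  have hx : (∑ i : Fin 7, x i ^ 2) = 1 := by
    have h := hip 0 0
    rw [if_pos rfl] at h
    rw [← h]
    exact Finset.sum_congr rfl fun i _ => pow_two (x i)
  have hCS := Finset.sum_mul_sq_le_sq_mul_sq Finset.univ (fun i => x i)
    (fun i => coA y z w i)
  rw [← psi_eq_sum, hx, one_mul] at hCS
  have h2 : psi x y z w ^ 2 ≤ 1 := le_trans hCS hA
  have := abs_nonneg (psi x y z w)
  nlinarith [sq_abs (psi x y z w)]
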